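/- arXiv:2002.03697 — 3 statements merged into one kernel-verified Lean document; each statement's English description precedes it below -/
import Mathlib

section
/- For two non-atomic Borel probability measures μ and ν on [0,1] with distribution functions F and G, the generalized monomials satisfy |q_{2k}(x) − q_{2k,ν}(x)| ≤ 2‖F−G‖_∞ x^k/(k−1)! and |q_{2k+1}(x) − q_{2k+1,ν}(x)| ≤ 2‖F−G‖_∞ x^k/(k−1)! for all x ∈ [0,1] and k ≥ 1, and the analogous estimates hold for p_{2k} and p_{2k+1}. -/
open MeasureTheory Set Real Filter

set_option linter.unusedSectionVars false
noncomputable def genP (μ : Measure ℝ) : ℕ → ℝ → ℝ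
  | 0 => fun _ => 1
  | k + 1 => fun x =>
      if Odd (k + 1) then ∫ t in (0:ℝ)..x, genP μ k t ∂μ
      else ∫ t in (0:ℝ)..x, genP μ k t

noncomputable def genQ (μ : Measure ℝ) : ℕ → ℝ → ℝ
  | 0 => fun _ => 1
  | k + 1 => fun x =>
      if Odd (k + 1) then ∫ t in (0:ℝ)..x, genQ μ k t
      else ∫ t in (0:ℝ)..x, genQ μ k t ∂μ

noncomputable def genCosh (μ : Measure ℝ) (z : ℝ) (x : ℝ) : ℝ :=
  ∑' k : ℕ, z ^ (2 * k) * genP μ (2 * k) x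

noncomputable def genSinh (μ : Measure ℝ) (z : ℝ) (x : ℝ) : ℝ :=
  ∑' k : ℕ, z ^ (2 * k + 1) * genQ μ (2 * k + 1) x

/-- sup-distance between distribution functions on [0,1] -/
noncomputable def distSup (μ ν : Measure ℝ) : ℝ :=
  ⨆ x : Set.Icc (0:ℝ) 1, |(μ (Set.Icc 0 (x:ℝ))).toReal - (ν (Set.Icc 0 (x:ℝ))).toReal|



/-- distribution function -/
noncomputable def FD (μ : Measure ℝ) (x : ℝ) : ℝ := (μ (Set.Icc 0 x)).toReal

section FDlem
variable (μ : Measure ℝ) [IsProbabilityMeasure μ]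

lemma FD_mono : Monotone (FD μ) := fun a b hab => by
  unfold FD
  exact ENNReal.toReal_mono (measure_ne_top μ _) (measure_mono (Icc_subset_Icc_right hab))

lemma FD_nonneg (x : ℝ) : 0 ≤ FD μ x := ENNReal.toReal_nonneg

lemma FD_le_one (x : ℝ) : FD μ x ≤ 1 := by
  unfold FD
  have := measure_mono (μ := μ) (subset_univ (Set.Icc 0 x))
  rw [measure_univ] at this
  simpa using ENNReal.toReal_mono (by simp) this

lemma FD_mem (x : ℝ) : FD μ x ∈ Set.Icc (0:ℝ) 1 := ⟨FD_nonneg μ x, FD_le_one μ x⟩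

lemma FD_measurable : Measurable (FD μ) := (FD_mono μ).measurable

lemma FD_Ioc (hna : ∀ x : ℝ, μ {x} = 0) {x : ℝ} (hx : 0 ≤ x) :
    (μ (Set.Ioc 0 x)).toReal = FD μ x := by
  unfold FD
  have h : Set.Icc (0:ℝ) x = {0} ∪ Set.Ioc 0 x := by
    rw [← Set.Icc_self (0:ℝ), Set.Icc_union_Ioc_eq_Icc le_rfl hx]
  rw [h, measure_union (by simp [Set.disjoint_left]) measurableSet_Ioc, hna 0, zero_add]

lemma FD_Icc_sub (hna : ∀ x : ℝ, μ {x} = 0) {s x : ℝ} (h0 : 0 ≤ s) (hsx : s ≤ x) :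
    (μ (Set.Icc s x)).toReal = FD μ x - FD μ s := by
  have hsplit : Set.Icc (0:ℝ) x = Set.Icc 0 s ∪ Set.Ioc s x := (Set.Icc_union_Ioc_eq_Icc h0 hsx).symm
  have hdisj : Disjoint (Set.Icc (0:ℝ) s) (Set.Ioc s x) := by
    simp [Set.disjoint_left]
    intro a _ ha hsa
    linarith
  have h1 : μ (Set.Icc 0 x) = μ (Set.Icc 0 s) + μ (Set.Ioc s x) := by
    rw [hsplit, measure_union hdisj measurableSet_Ioc]
  have h2 : μ (Set.Icc s x) = μ (Set.Ioc s x) := by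
    have : Set.Icc s x = {s} ∪ Set.Ioc s x := by
      rw [← Set.Icc_self s, Set.Icc_union_Ioc_eq_Icc le_rfl hsx]
    rw [this, measure_union _ measurableSet_Ioc, hna s, zero_add]
    simp [Set.disjoint_left]
  unfold FD
  rw [h1, h2, ENNReal.toReal_add (measure_ne_top μ _) (measure_ne_top μ _)]
  ring

end FDlem

/-- interval integrability of bounded measurable function -/
lemma II_of_bdd {f : ℝ → ℝ} (hm : Measurable f) {C : ℝ} {a b : ℝ}
    (hb : ∀ s ∈ Set.uIcc a b, |f s| ≤ C) : IntervalIntegrable f volume a b := by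
  refine IntervalIntegrable.mono_fun (intervalIntegrable_const (c := C))
    hm.aestronglyMeasurable ?_
  rw [Filter.EventuallyLE, ae_restrict_iff' measurableSet_uIoc]
  exact ae_of_all _ (fun s hs => by
    simpa [Real.norm_eq_abs] using (hb s (uIoc_subset_uIcc hs)).trans (le_abs_self C))

noncomputable def iterT (F f0 : ℝ → ℝ) : ℕ → ℝ → ℝ
  | 0 => f0
  | k+1 => fun x => ∫ s in (0:ℝ)..x, iterT F f0 k s * (F x - F s)

section iterTlem
variable {F f0 : ℝ → ℝ}

lemma abs_le_of_uIoc {x s : ℝ} (hs : s ∈ Set.uIoc 0 x) : |s| ≤ |x| := by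
  rcases hs with ⟨h1, h2⟩
  rcases le_total 0 x with h | h
  · rw [min_eq_left h] at h1; rw [max_eq_right h] at h2
    rw [abs_of_pos h1, abs_of_nonneg h]; exact h2
  · rw [min_eq_right h] at h1; rw [max_eq_left h] at h2
    rw [abs_of_nonpos h2, abs_of_nonpos h]; linarith

lemma abs_sub_le_one {a b : ℝ} (ha : a ∈ Set.Icc (0:ℝ) 1) (hb : b ∈ Set.Icc (0:ℝ) 1) :
    |a - b| ≤ 1 := by
  rcases ha with ⟨h1, h2⟩; rcases hb with ⟨h3, h4⟩
  rw [abs_le]; constructor <;> linarith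

lemma iterT_abs_le (hF01 : ∀ s, F s ∈ Set.Icc (0:ℝ) 1)
    (hf01 : ∀ s, f0 s ∈ Set.Icc (0:ℝ) 1) :
    ∀ k x, |iterT F f0 k x| ≤ (1+|x|)^k := by
  intro k
  induction k with
  | zero => intro x; show |f0 x| ≤ (1+|x|)^0; simpa using abs_le.mpr ⟨by linarith [(hf01 x).1], (hf01 x).2⟩
  | succ k ih =>
    intro x
    have key : ∀ s ∈ Set.uIoc 0 x, ‖iterT F f0 k s * (F x - F s)‖ ≤ (1+|x|)^k := by
      intro s hs
      rw [Real.norm_eq_abs, abs_mul]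
      have h1 : |iterT F f0 k s| ≤ (1+|x|)^k :=
        (ih s).trans (pow_le_pow_left₀ (by positivity) (by linarith [abs_le_of_uIoc hs]) k)
      have h2 : |F x - F s| ≤ 1 := abs_sub_le_one (hF01 x) (hF01 s)
      calc |iterT F f0 k s| * |F x - F s| ≤ (1+|x|)^k * 1 :=
            mul_le_mul h1 h2 (abs_nonneg _) (by positivity)
        _ = (1+|x|)^k := mul_one _
    calc |iterT F f0 (k+1) x| ≤ (1+|x|)^k * |x - 0| :=
          intervalIntegral.norm_integral_le_of_norm_le_const key
      _ ≤ (1+|x|)^k * (1+|x|) := by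
          apply mul_le_mul_of_nonneg_left _ (by positivity)
          rw [sub_zero]; linarith [abs_nonneg x]
      _ = (1+|x|)^(k+1) := (pow_succ _ _).symm

lemma abs_le_of_uIcc {a b s : ℝ} (hs : s ∈ Set.uIcc a b) : |s| ≤ max |a| |b| := by
  rw [Set.uIcc, Set.mem_Icc] at hs
  rcases hs with ⟨h1, h2⟩
  rw [abs_le]
  constructor
  · refine le_trans ?_ h1
    apply le_min <;> [linarith [neg_abs_le a, le_max_left |a| |b|];
      linarith [neg_abs_le b, le_max_right |a| |b|]]
  · exact h2.trans (max_le_max (le_abs_self a) (le_abs_self b))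

lemma iterT_intInt (hF01 : ∀ s, F s ∈ Set.Icc (0:ℝ) 1)
    (hf01 : ∀ s, f0 s ∈ Set.Icc (0:ℝ) 1) {k : ℕ}
    (hm : Measurable (iterT F f0 k)) (a b : ℝ) :
    IntervalIntegrable (iterT F f0 k) volume a b := by
  apply II_of_bdd hm (C := (1 + max |a| |b|)^k)
  intro s hs
  refine (iterT_abs_le hF01 hf01 k s).trans (pow_le_pow_left₀ (by positivity) ?_ k)
  linarith [abs_le_of_uIcc hs]

lemma iterT_mulF_intInt (hFm : Measurable F) (hF01 : ∀ s, F s ∈ Set.Icc (0:ℝ) 1)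
    (hf01 : ∀ s, f0 s ∈ Set.Icc (0:ℝ) 1) {k : ℕ}
    (hm : Measurable (iterT F f0 k)) (a b : ℝ) :
    IntervalIntegrable (fun s => iterT F f0 k s * F s) volume a b := by
  apply II_of_bdd (hm.mul hFm) (C := (1 + max |a| |b|)^k)
  intro s hs
  simp only [Pi.mul_apply]
  rw [abs_mul]
  calc |iterT F f0 k s| * |F s| ≤ |iterT F f0 k s| * 1 := by
        apply mul_le_mul_of_nonneg_left _ (abs_nonneg _)
        rw [abs_of_nonneg (hF01 s).1]; exact (hF01 s).2
    _ = |iterT F f0 k s| := mul_one _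
    _ ≤ (1 + max |a| |b|)^k := by
        refine (iterT_abs_le hF01 hf01 k s).trans (pow_le_pow_left₀ (by positivity) ?_ k)
        linarith [abs_le_of_uIcc hs]

lemma iterT_measurable (hFm : Measurable F) (hF01 : ∀ s, F s ∈ Set.Icc (0:ℝ) 1)
    (hf0m : Measurable f0) (hf01 : ∀ s, f0 s ∈ Set.Icc (0:ℝ) 1) :
    ∀ k, Measurable (iterT F f0 k) := by
  intro k
  induction k with
  | zero => exact hf0m
  | succ k ih =>
    have hii := iterT_intInt hF01 hf01 ih
    have hiiF := iterT_mulF_intInt hFm hF01 hf01 ih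
    have heq : iterT F f0 (k+1) = fun x =>
        (∫ s in (0:ℝ)..x, iterT F f0 k s) * F x
          - ∫ s in (0:ℝ)..x, iterT F f0 k s * F s := by
      funext x
      show (∫ s in (0:ℝ)..x, iterT F f0 k s * (F x - F s)) = _
      rw [← intervalIntegral.integral_mul_const,
        ← intervalIntegral.integral_sub ((hii 0 x).mul_const (F x)) (hiiF 0 x)]
      congr 1
      funext s
      ring
    rw [heq]
    exact (((intervalIntegral.continuous_primitive hii 0).measurable).mul hFm).sub
      (intervalIntegral.continuous_primitive hiiF 0).measurable

lemma iterT_nonneg (hFmono : Monotone F) (hF01 : ∀ s, F s ∈ Set.Icc (0:ℝ) 1)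
    (hf01 : ∀ s, f0 s ∈ Set.Icc (0:ℝ) 1) :
    ∀ k, ∀ x ∈ Set.Icc (0:ℝ) 1, 0 ≤ iterT F f0 k x := by
  intro k
  induction k with
  | zero => exact fun x _ => (hf01 x).1
  | succ k ih =>
    intro x hx
    apply intervalIntegral.integral_nonneg hx.1
    intro s hs
    have hs1 : s ∈ Set.Icc (0:ℝ) 1 := ⟨hs.1, hs.2.trans hx.2⟩
    exact mul_nonneg (ih s hs1) (by linarith [hFmono hs.2])

lemma iterT_le (hFmono : Monotone F) (hFm : Measurable F)
    (hF01 : ∀ s, F s ∈ Set.Icc (0:ℝ) 1)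
    (hf0m : Measurable f0) (hf01 : ∀ s, f0 s ∈ Set.Icc (0:ℝ) 1) :
    ∀ k, ∀ x ∈ Set.Icc (0:ℝ) 1, iterT F f0 k x ≤ x ^ k / (Nat.factorial k : ℝ) := by
  intro k
  induction k with
  | zero => intro x _; show f0 x ≤ x ^ 0 / (Nat.factorial 0 : ℝ); simpa using (hf01 x).2
  | succ k ih =>
    intro x hx
    have hm := iterT_measurable hFm hF01 hf0m hf01 k
    have step : (∫ s in (0:ℝ)..x, iterT F f0 k s * (F x - F s))
        ≤ ∫ s in (0:ℝ)..x, s ^ k / (Nat.factorial k : ℝ) := by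
      apply intervalIntegral.integral_mono_on hx.1
      · apply II_of_bdd (hm.mul (measurable_const.sub hFm)) (C := (1 + max |0| |x|)^k)
        intro s hs
        simp only [Pi.mul_apply, Pi.sub_apply]
        rw [abs_mul]
        calc |iterT F f0 k s| * |F x - F s| ≤ |iterT F f0 k s| * 1 := by
              apply mul_le_mul_of_nonneg_left _ (abs_nonneg _)
              exact abs_sub_le_one (hF01 x) (hF01 s)
          _ = |iterT F f0 k s| := mul_one _
          _ ≤ (1 + max |0| |x|)^k := by
              refine (iterT_abs_le hF01 hf01 k s).trans
                (pow_le_pow_left₀ (by positivity) ?_ k)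
              linarith [abs_le_of_uIcc hs]
      · exact (continuous_pow k |>.div_const _).intervalIntegrable 0 x
      · intro s hs
        have hs1 : s ∈ Set.Icc (0:ℝ) 1 := ⟨hs.1, hs.2.trans hx.2⟩
        have hsk : (0:ℝ) ≤ s ^ k / (Nat.factorial k : ℝ) := by
          have := hs.1; positivity
        calc iterT F f0 k s * (F x - F s) ≤ (s ^ k / (Nat.factorial k : ℝ)) * 1 := by
              apply mul_le_mul (ih s hs1) ?_ ?_ hsk
              · linarith [(hF01 x).2, (hF01 s).1]
              · linarith [hFmono hs.2]
          _ = s ^ k / (Nat.factorial k : ℝ) := mul_one _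
    have : (∫ s in (0:ℝ)..x, s ^ k / (Nat.factorial k : ℝ))
        = x ^ (k+1) / (Nat.factorial (k+1) : ℝ) := by
      rw [intervalIntegral.integral_div, integral_pow]
      rw [Nat.factorial_succ]
      push_cast
      field_simp
      simp
    show (∫ s in (0:ℝ)..x, iterT F f0 k s * (F x - F s)) ≤ _
    exact step.trans (le_of_eq this)

end iterTlem

lemma fubini_key (μ : Measure ℝ) [IsProbabilityMeasure μ] (hna : ∀ x : ℝ, μ {x} = 0)
    {u : ℝ → ℝ} (hu : Measurable u) {C : ℝ} (hbd : ∀ s ∈ Set.Icc (0:ℝ) 1, |u s| ≤ C)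
    {x : ℝ} (hx : x ∈ Set.Icc (0:ℝ) 1) :
    (∫ t in (0:ℝ)..x, (∫ s in (0:ℝ)..t, u s) ∂μ)
      = ∫ s in (0:ℝ)..x, u s * (FD μ x - FD μ s) := by
  rw [intervalIntegral.integral_of_le hx.1, intervalIntegral.integral_of_le hx.1]
  set ν1 := μ.restrict (Set.Ioc 0 x) with hν1
  set ν2 := (volume : Measure ℝ).restrict (Set.Ioc (0:ℝ) x) with hν2
  set f : ℝ → ℝ → ℝ := fun t s => (Set.Ioc (0:ℝ) t).indicator u s with hf
  have hnu2 : IsFiniteMeasure ν2 := by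
    constructor
    rw [hν2, Measure.restrict_apply MeasurableSet.univ, Set.univ_inter]
    exact (measure_Ioc_lt_top)
  have stepA : (∫ t in Set.Ioc (0:ℝ) x, (∫ s in (0:ℝ)..t, u s) ∂μ)
      = ∫ t, (∫ s, f t s ∂ν2) ∂ν1 := by
    apply setIntegral_congr_fun measurableSet_Ioc
    intro t ht
    show (∫ s in (0:ℝ)..t, u s) = ∫ s, f t s ∂ν2
    rw [intervalIntegral.integral_of_le ht.1.le, hf]
    simp only
    rw [integral_indicator measurableSet_Ioc, hν2,
      Measure.restrict_restrict measurableSet_Ioc,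
      Set.inter_eq_left.mpr (Set.Ioc_subset_Ioc_right ht.2)]
  have hmeas : Measurable (Function.uncurry f) := by
    have : Function.uncurry f = Set.indicator {p : ℝ × ℝ | 0 < p.2 ∧ p.2 ≤ p.1}
        (fun p => u p.2) := by
      funext p
      simp [Function.uncurry, hf, Set.indicator_apply, Set.mem_Ioc]
    rw [this]
    exact (hu.comp measurable_snd).indicator
      ((measurableSet_lt measurable_const measurable_snd).inter
        (measurableSet_le measurable_snd measurable_fst))
  have hint : Integrable (Function.uncurry f) (ν1.prod ν2) := by
    constructor
    · exact hmeas.aestronglyMeasurable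
    · apply HasFiniteIntegral.of_bounded (C := |C|)
      have hnull : (ν1.prod ν2) (Set.univ ×ˢ (Set.Ioc (0:ℝ) x)ᶜ) = 0 := by
        rw [Measure.prod_prod]
        have : ν2 (Set.Ioc (0:ℝ) x)ᶜ = 0 := by
          rw [hν2, Measure.restrict_apply measurableSet_Ioc.compl]
          simp
        rw [this, mul_zero]
      filter_upwards [measure_eq_zero_iff_ae_notMem.mp hnull] with p hp
      have hp2 : p.2 ∈ Set.Ioc (0:ℝ) x := by
        by_contra hc
        exact hp (by simp [hc])
      have hp21 : p.2 ∈ Set.Icc (0:ℝ) 1 := ⟨hp2.1.le, hp2.2.trans hx.2⟩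
      rw [Real.norm_eq_abs]
      by_cases hmem : p.2 ∈ Set.Ioc (0:ℝ) p.1
      · rw [Function.uncurry, hf]
        simp only [Set.indicator_of_mem hmem]
        exact (hbd _ hp21).trans (le_abs_self C)
      · rw [Function.uncurry, hf]
        simp only [Set.indicator_of_notMem hmem, abs_zero]
        exact abs_nonneg C
  have stepB := integral_integral_swap hint
  have stepC : (∫ s, (∫ t, f t s ∂ν1) ∂ν2)
      = ∫ s in Set.Ioc (0:ℝ) x, u s * (FD μ x - FD μ s) := by
    apply setIntegral_congr_fun measurableSet_Ioc
    intro s hs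
    show (∫ t, f t s ∂ν1) = u s * (FD μ x - FD μ s)
    have heq : (fun t => f t s) = (Set.Ici s).indicator (fun _ => u s) := by
      funext t
      simp only [hf, Set.indicator_apply, Set.mem_Ioc, Set.mem_Ici]
      by_cases h : s ≤ t
      · simp [h, hs.1]
      · simp [h]
    rw [heq, integral_indicator_const _ measurableSet_Ici, hν1,
      measureReal_restrict_apply measurableSet_Ici]
    have : Set.Ici s ∩ Set.Ioc 0 x = Set.Icc s x := by
      ext t
      simp only [Set.mem_inter_iff, Set.mem_Ici, Set.mem_Ioc, Set.mem_Icc]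
      constructor
      · rintro ⟨h1, _, h3⟩; exact ⟨h1, h3⟩
      · rintro ⟨h1, h2⟩; exact ⟨h1, lt_of_lt_of_le hs.1 h1, h2⟩
    rw [this, measureReal_def, FD_Icc_sub μ hna hs.1.le hs.2, smul_eq_mul, mul_comm]
  rw [stepA, stepB, stepC]

lemma not_odd_2k2 (k : ℕ) : ¬ Odd (2*k+2) := by rintro ⟨m, hm⟩; omega

lemma genQ_odd_unfold (μ : Measure ℝ) (k : ℕ) (x : ℝ) :
    genQ μ (2*k+1) x = ∫ t in (0:ℝ)..x, genQ μ (2*k) t := by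
  simp only [genQ]
  rw [if_pos (odd_two_mul_add_one k)]

lemma genQ_even_unfold (μ : Measure ℝ) (k : ℕ) (x : ℝ) :
    genQ μ (2*k+2) x = ∫ t in (0:ℝ)..x, genQ μ (2*k+1) t ∂μ := by
  show genQ μ ((2*k+1)+1) x = _
  simp only [genQ]
  rw [if_neg (by rw [show 2*k+1+1 = 2*k+2 from rfl]; exact not_odd_2k2 k)]

lemma genP_odd_unfold (μ : Measure ℝ) (k : ℕ) (x : ℝ) :
    genP μ (2*k+1) x = ∫ t in (0:ℝ)..x, genP μ (2*k) t ∂μ := by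
  simp only [genP]
  rw [if_pos (odd_two_mul_add_one k)]

lemma genP_even_unfold (μ : Measure ℝ) (k : ℕ) (x : ℝ) :
    genP μ (2*k+2) x = ∫ t in (0:ℝ)..x, genP μ (2*k+1) t := by
  show genP μ ((2*k+1)+1) x = _
  simp only [genP]
  rw [if_neg (by rw [show 2*k+1+1 = 2*k+2 from rfl]; exact not_odd_2k2 k)]

section Ident
variable (μ : Measure ℝ) [IsProbabilityMeasure μ] (hna : ∀ x : ℝ, μ {x} = 0)

lemma iterT_abs_le_one {F f0 : ℝ → ℝ} (hFmono : Monotone F) (hFm : Measurable F)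
    (hF01 : ∀ s, F s ∈ Set.Icc (0:ℝ) 1)
    (hf0m : Measurable f0) (hf01 : ∀ s, f0 s ∈ Set.Icc (0:ℝ) 1) (k : ℕ) :
    ∀ s ∈ Set.Icc (0:ℝ) 1, |iterT F f0 k s| ≤ 1 := by
  intro s hs
  rw [abs_of_nonneg (iterT_nonneg hFmono hF01 hf01 k s hs)]
  refine (iterT_le hFmono hFm hF01 hf0m hf01 k s hs).trans ?_
  have h1 : s ^ k ≤ 1 := pow_le_one₀ hs.1 hs.2
  have h2 : (1:ℝ) ≤ (Nat.factorial k : ℝ) := by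
    exact_mod_cast Nat.one_le_iff_ne_zero.mpr (Nat.factorial_ne_zero k)
  rw [div_le_one (by linarith)]
  exact h1.trans h2

include hna in
lemma genQ_eq_iterT :
    ∀ k, ∀ x ∈ Set.Icc (0:ℝ) 1, genQ μ (2*k) x = iterT (FD μ) (fun _ => 1) k x := by
  have hFm := FD_measurable μ
  have hFmono := FD_mono μ
  have hF01 := FD_mem μ
  have hf01 : ∀ s : ℝ, (fun _ : ℝ => (1:ℝ)) s ∈ Set.Icc (0:ℝ) 1 := fun _ => ⟨zero_le_one, le_rfl⟩
  intro k
  induction k with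
  | zero => intro x _; rfl
  | succ k ih =>
    intro x hx
    have h2 : 2*(k+1) = 2*k+2 := by ring
    rw [h2, genQ_even_unfold]
    have congr1 : (∫ t in (0:ℝ)..x, genQ μ (2*k+1) t ∂μ)
        = ∫ t in (0:ℝ)..x, (∫ s in (0:ℝ)..t, iterT (FD μ) (fun _ => 1) k s) ∂μ := by
      apply intervalIntegral.integral_congr
      intro t ht
      rw [Set.uIcc_of_le hx.1] at ht
      rw [genQ_odd_unfold]
      apply intervalIntegral.integral_congr
      intro s hs
      rw [Set.uIcc_of_le ht.1] at hs
      exact ih s ⟨hs.1, hs.2.trans (ht.2.trans hx.2)⟩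
    rw [congr1,
      fubini_key μ hna (iterT_measurable hFm hF01 measurable_const hf01 k)
        (iterT_abs_le_one hFmono hFm hF01 measurable_const hf01 k) hx]
    rfl

include hna in
lemma genP_eq_iterT :
    ∀ k, ∀ x ∈ Set.Icc (0:ℝ) 1, genP μ (2*k+1) x = iterT (FD μ) (FD μ) k x := by
  have hFm := FD_measurable μ
  have hFmono := FD_mono μ
  have hF01 := FD_mem μ
  intro k
  induction k with
  | zero =>
    intro x hx
    show genP μ (0+1) x = FD μ x
    simp only [genP]
    rw [if_pos (by exact ⟨0, rfl⟩ : Odd (0+1))]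
    rw [intervalIntegral.integral_of_le hx.1, setIntegral_const, smul_eq_mul, mul_one]
    exact FD_Ioc μ hna hx.1
  | succ k ih =>
    intro x hx
    have h2 : 2*(k+1)+1 = (2*k+2)+1 := by ring
    have h3 : (2*k+2)+1 = 2*(k+1)+1 := by ring
    rw [h2]
    have unfold1 : genP μ ((2*k+2)+1) x = ∫ t in (0:ℝ)..x, genP μ (2*k+2) t ∂μ := by
      have := genP_odd_unfold μ (k+1) x
      rw [show 2*(k+1)+1 = (2*k+2)+1 from by ring, show 2*(k+1) = 2*k+2 from by ring] at this
      exact this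
    rw [unfold1]
    have congr1 : (∫ t in (0:ℝ)..x, genP μ (2*k+2) t ∂μ)
        = ∫ t in (0:ℝ)..x, (∫ s in (0:ℝ)..t, iterT (FD μ) (FD μ) k s) ∂μ := by
      apply intervalIntegral.integral_congr
      intro t ht
      rw [Set.uIcc_of_le hx.1] at ht
      rw [genP_even_unfold]
      apply intervalIntegral.integral_congr
      intro s hs
      rw [Set.uIcc_of_le ht.1] at hs
      exact ih s ⟨hs.1, hs.2.trans (ht.2.trans hx.2)⟩
    rw [congr1,
      fubini_key μ hna (iterT_measurable hFm hF01 hFm hF01 k)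
        (iterT_abs_le_one hFmono hFm hF01 hFm hF01 k) hx]
    rfl

end Ident

/-- |∫ f| ≤ ∫ B when |f| ≤ B pointwise -/
lemma abs_intervalIntegral_le {f B : ℝ → ℝ} {x : ℝ} (hx : 0 ≤ x)
    (hf : IntervalIntegrable f volume 0 x) (hB : IntervalIntegrable B volume 0 x)
    (h : ∀ s ∈ Set.Icc (0:ℝ) x, |f s| ≤ B s) :
    |∫ s in (0:ℝ)..x, f s| ≤ ∫ s in (0:ℝ)..x, B s := by
  rw [abs_le]
  constructor
  · have h2 : (∫ s in (0:ℝ)..x, -B s) ≤ ∫ s in (0:ℝ)..x, f s :=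
      intervalIntegral.integral_mono_on (f := fun s => -B s) hx hB.neg hf
        (fun s hs => by show -B s ≤ f s; have := abs_le.mp (h s hs); linarith)
    rw [intervalIntegral.integral_neg] at h2
    linarith
  · exact intervalIntegral.integral_mono_on hx hf hB
      (fun s hs => le_of_abs_le (h s hs))

lemma key_alg {a b A B D : ℝ} (hD : 0 ≤ D) (ha : 0 ≤ a) (haA : a ≤ A) (hA : A ≤ 1)
    (hb : 0 ≤ b) (hbB : b ≤ B) (hB : B ≤ 1) (h1 : |a - b| ≤ D) (h2 : |A - B| ≤ D) :
    |a * (A - a) - b * (B - b)| ≤ 2 * D := by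
  rw [abs_le] at h1 h2 ⊢
  rcases le_or_gt (a + b) A with h | h
  · have e1 : (a - b) * (A - a - b) ≤ D * (A - a - b) :=
      mul_le_mul_of_nonneg_right h1.2 (by linarith)
    have e1' : (-D) * (A - a - b) ≤ (a - b) * (A - a - b) :=
      mul_le_mul_of_nonneg_right (by linarith) (by linarith)
    have e2 : (A - B) * b ≤ D * b := mul_le_mul_of_nonneg_right h2.2 hb
    have e2' : (-D) * b ≤ (A - B) * b := mul_le_mul_of_nonneg_right (by linarith) hb
    constructor <;> nlinarith
  · have e1 : (b - a) * (a + b - A) ≤ D * b := by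
      have : (b - a) * (a + b - A) ≤ D * (a + b - A) :=
        mul_le_mul_of_nonneg_right (by linarith) (by linarith)
      refine this.trans (mul_le_mul_of_nonneg_left (by linarith) hD)
    have e1' : (a - b) * (a + b - A) ≤ D * b := by
      have : (a - b) * (a + b - A) ≤ D * (a + b - A) :=
        mul_le_mul_of_nonneg_right h1.2 (by linarith)
      refine this.trans (mul_le_mul_of_nonneg_left (by linarith) hD)
    have e2 : (A - B) * b ≤ D * b := mul_le_mul_of_nonneg_right h2.2 hb
    have e2' : (-D) * b ≤ (A - B) * b := mul_le_mul_of_nonneg_right (by linarith) hb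
    have hb1 : b ≤ 1 := hbB.trans hB
    constructor <;> nlinarith

section Est
variable {F G : ℝ → ℝ} {D : ℝ}
variable (hFmono : Monotone F) (hGmono : Monotone G)
  (hFm : Measurable F) (hGm : Measurable G)
  (hF01 : ∀ s, F s ∈ Set.Icc (0:ℝ) 1) (hG01 : ∀ s, G s ∈ Set.Icc (0:ℝ) 1)
  (hD0 : 0 ≤ D) (hD : ∀ s ∈ Set.Icc (0:ℝ) 1, |F s - G s| ≤ D)

include hD0 hD in
lemma est_step {u v : ℝ → ℝ} {m : ℕ} (hum : Measurable u) (hvm : Measurable v)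
    (hFm' : Measurable F) (hGm' : Measurable G)
    (hF01' : ∀ s, F s ∈ Set.Icc (0:ℝ) 1) (hG01' : ∀ s, G s ∈ Set.Icc (0:ℝ) 1)
    (hub : ∀ s ∈ Set.Icc (0:ℝ) 1, 0 ≤ u s ∧ u s ≤ s^(m+1) / (Nat.factorial (m+1) : ℝ))
    (hvb : ∀ s ∈ Set.Icc (0:ℝ) 1, 0 ≤ v s ∧ v s ≤ s^(m+1) / (Nat.factorial (m+1) : ℝ))
    (huv : ∀ s ∈ Set.Icc (0:ℝ) 1, |u s - v s| ≤ 2*D*s^(m+1) / (Nat.factorial m : ℝ)) :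
    ∀ x ∈ Set.Icc (0:ℝ) 1,
      |(∫ s in (0:ℝ)..x, u s * (F x - F s)) - ∫ s in (0:ℝ)..x, v s * (G x - G s)|
        ≤ 2*D*x^(m+2) / (Nat.factorial (m+1) : ℝ) := by
  intro x hx
  have hfac : (0:ℝ) < (Nat.factorial m : ℝ) := by exact_mod_cast Nat.factorial_pos m
  have hfac1 : (0:ℝ) < (Nat.factorial (m+1) : ℝ) := by exact_mod_cast Nat.factorial_pos (m+1)
  set c : ℝ := 2*D / (Nat.factorial m : ℝ) + 2*D / (Nat.factorial (m+1) : ℝ) with hc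
  have hbd1 : ∀ s ∈ Set.Icc (0:ℝ) 1, |u s| ≤ 1 := by
    intro s hs
    rw [abs_of_nonneg (hub s hs).1]
    refine (hub s hs).2.trans ?_
    rw [div_le_one hfac1]
    calc s^(m+1) ≤ 1 := pow_le_one₀ hs.1 hs.2
      _ ≤ _ := by exact_mod_cast Nat.one_le_iff_ne_zero.mpr (Nat.factorial_ne_zero (m+1))
  have hbd2 : ∀ s ∈ Set.Icc (0:ℝ) 1, |v s| ≤ 1 := by
    intro s hs
    rw [abs_of_nonneg (hvb s hs).1]
    refine (hvb s hs).2.trans ?_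
    rw [div_le_one hfac1]
    calc s^(m+1) ≤ 1 := pow_le_one₀ hs.1 hs.2
      _ ≤ _ := by exact_mod_cast Nat.one_le_iff_ne_zero.mpr (Nat.factorial_ne_zero (m+1))
  have hIu : IntervalIntegrable (fun s => u s * (F x - F s)) volume 0 x := by
    apply II_of_bdd (hum.mul (measurable_const.sub hFm')) (C := 1)
    intro s hs
    rw [Set.uIcc_of_le hx.1] at hs
    have hs1 : s ∈ Set.Icc (0:ℝ) 1 := ⟨hs.1, hs.2.trans hx.2⟩
    simp only [Pi.mul_apply, Pi.sub_apply]
    rw [abs_mul]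
    calc |u s| * |F x - F s| ≤ 1 * 1 :=
          mul_le_mul (hbd1 s hs1) (abs_sub_le_one (hF01' x) (hF01' s)) (abs_nonneg _) zero_le_one
      _ = 1 := mul_one 1
  have hIv : IntervalIntegrable (fun s => v s * (G x - G s)) volume 0 x := by
    apply II_of_bdd (hvm.mul (measurable_const.sub hGm')) (C := 1)
    intro s hs
    rw [Set.uIcc_of_le hx.1] at hs
    have hs1 : s ∈ Set.Icc (0:ℝ) 1 := ⟨hs.1, hs.2.trans hx.2⟩
    simp only [Pi.mul_apply, Pi.sub_apply]
    rw [abs_mul]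
    calc |v s| * |G x - G s| ≤ 1 * 1 :=
          mul_le_mul (hbd2 s hs1) (abs_sub_le_one (hG01' x) (hG01' s)) (abs_nonneg _) zero_le_one
      _ = 1 := mul_one 1
  rw [← intervalIntegral.integral_sub hIu hIv]
  have hIB : IntervalIntegrable (fun s => c * s^(m+1)) volume 0 x :=
    ((continuous_const.mul (continuous_pow (m+1))).intervalIntegrable 0 x)
  have hptwise : ∀ s ∈ Set.Icc (0:ℝ) x,
      |u s * (F x - F s) - v s * (G x - G s)| ≤ c * s^(m+1) := by
    intro s hs
    have hs1 : s ∈ Set.Icc (0:ℝ) 1 := ⟨hs.1, hs.2.trans hx.2⟩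
    have e : u s * (F x - F s) - v s * (G x - G s)
        = (u s - v s) * (F x - F s) + v s * ((F x - G x) - (F s - G s)) := by ring
    rw [e]
    have t1 : |(u s - v s) * (F x - F s)| ≤ 2*D*s^(m+1) / (Nat.factorial m : ℝ) := by
      rw [abs_mul]
      calc |u s - v s| * |F x - F s| ≤ (2*D*s^(m+1) / (Nat.factorial m : ℝ)) * 1 :=
            mul_le_mul (huv s hs1) (abs_sub_le_one (hF01' x) (hF01' s)) (abs_nonneg _)
              (by have := hs.1; positivity)
        _ = _ := mul_one _
    have t2 : |v s * ((F x - G x) - (F s - G s))|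
        ≤ (s^(m+1) / (Nat.factorial (m+1) : ℝ)) * (2*D) := by
      rw [abs_mul]
      apply mul_le_mul
      · rw [abs_of_nonneg (hvb s hs1).1]; exact (hvb s hs1).2
      · calc |(F x - G x) - (F s - G s)| ≤ |F x - G x| + |F s - G s| := abs_sub _ _
          _ ≤ D + D := add_le_add (hD x hx) (hD s hs1)
          _ = 2*D := by ring
      · exact abs_nonneg _
      · have := hs.1; positivity
    calc |(u s - v s) * (F x - F s) + v s * ((F x - G x) - (F s - G s))|
        ≤ |(u s - v s) * (F x - F s)| + |v s * ((F x - G x) - (F s - G s))| := abs_add_le _ _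
      _ ≤ 2*D*s^(m+1) / (Nat.factorial m : ℝ) + (s^(m+1) / (Nat.factorial (m+1) : ℝ)) * (2*D) :=
          add_le_add t1 t2
      _ = c * s^(m+1) := by rw [hc]; ring
  refine (abs_intervalIntegral_le hx.1 (hIu.sub hIv) hIB hptwise).trans ?_
  rw [intervalIntegral.integral_const_mul, integral_pow]
  have hfs : ((Nat.factorial (m+1) : ℕ) : ℝ) = ((m:ℝ)+1) * (Nat.factorial m : ℝ) := by
    rw [Nat.factorial_succ]; push_cast; ring
  apply le_of_eq
  rw [hc, hfs]
  have hz : (0:ℝ)^(m+1+1) = 0 := zero_pow (by omega)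
  rw [hz, sub_zero, show m+1+1 = m+2 from rfl]
  have hr : (Nat.factorial m : ℝ) ≠ 0 := ne_of_gt hfac
  have hm1 : ((m:ℝ)+1) ≠ 0 := by positivity
  have hm2 : ((m:ℝ)+1+1) ≠ 0 := by positivity
  push_cast
  field_simp

include hFmono hGmono hFm hGm hF01 hG01 hD0 hD in
lemma est_iterT {f0 g0 : ℝ → ℝ} (hf0m : Measurable f0) (hg0m : Measurable g0)
    (hf01 : ∀ s, f0 s ∈ Set.Icc (0:ℝ) 1) (hg01 : ∀ s, g0 s ∈ Set.Icc (0:ℝ) 1)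
    (hbase : ∀ x ∈ Set.Icc (0:ℝ) 1,
      |iterT F f0 1 x - iterT G g0 1 x| ≤ 2*D*x^1 / (Nat.factorial 0 : ℝ)) :
    ∀ m, ∀ x ∈ Set.Icc (0:ℝ) 1,
      |iterT F f0 (m+1) x - iterT G g0 (m+1) x| ≤ 2*D*x^(m+1) / (Nat.factorial m : ℝ) := by
  intro m
  induction m with
  | zero => exact hbase
  | succ m ih =>
    intro x hx
    have hu := iterT_measurable hFm hF01 hf0m hf01 (m+1)
    have hv := iterT_measurable hGm hG01 hg0m hg01 (m+1)
    have hub : ∀ s ∈ Set.Icc (0:ℝ) 1,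
        0 ≤ iterT F f0 (m+1) s ∧ iterT F f0 (m+1) s ≤ s^(m+1) / (Nat.factorial (m+1) : ℝ) :=
      fun s hs => ⟨iterT_nonneg hFmono hF01 hf01 (m+1) s hs,
        iterT_le hFmono hFm hF01 hf0m hf01 (m+1) s hs⟩
    have hvb : ∀ s ∈ Set.Icc (0:ℝ) 1,
        0 ≤ iterT G g0 (m+1) s ∧ iterT G g0 (m+1) s ≤ s^(m+1) / (Nat.factorial (m+1) : ℝ) :=
      fun s hs => ⟨iterT_nonneg hGmono hG01 hg01 (m+1) s hs,
        iterT_le hGmono hGm hG01 hg0m hg01 (m+1) s hs⟩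
    exact est_step hD0 hD hu hv hFm hGm hF01 hG01 hub hvb ih x hx

include hFmono hGmono hFm hGm hF01 hG01 hD0 hD in
lemma base_q : ∀ x ∈ Set.Icc (0:ℝ) 1,
    |iterT F (fun _ => 1) 1 x - iterT G (fun _ => 1) 1 x|
      ≤ 2*D*x^1 / (Nat.factorial 0 : ℝ) := by
  intro x hx
  have hIF : IntervalIntegrable (fun s => (fun _ : ℝ => (1:ℝ)) s * (F x - F s)) volume 0 x := by
    apply II_of_bdd (measurable_const.mul (measurable_const.sub hFm)) (C := 1)
    intro s hs
    simpa using abs_sub_le_one (hF01 x) (hF01 s)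
  have hIG : IntervalIntegrable (fun s => (fun _ : ℝ => (1:ℝ)) s * (G x - G s)) volume 0 x := by
    apply II_of_bdd (measurable_const.mul (measurable_const.sub hGm)) (C := 1)
    intro s hs
    simpa using abs_sub_le_one (hG01 x) (hG01 s)
  show |(∫ s in (0:ℝ)..x, (fun _ : ℝ => (1:ℝ)) s * (F x - F s))
      - ∫ s in (0:ℝ)..x, (fun _ : ℝ => (1:ℝ)) s * (G x - G s)| ≤ _
  rw [← intervalIntegral.integral_sub hIF hIG]
  have hpt : ∀ s ∈ Set.Icc (0:ℝ) x,
      |(fun _ : ℝ => (1:ℝ)) s * (F x - F s) - (fun _ : ℝ => (1:ℝ)) s * (G x - G s)|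
        ≤ (fun _ : ℝ => 2*D) s := by
    intro s hs
    have hs1 : s ∈ Set.Icc (0:ℝ) 1 := ⟨hs.1, hs.2.trans hx.2⟩
    simp only [one_mul]
    calc |(F x - F s) - (G x - G s)| = |(F x - G x) - (F s - G s)| := by ring_nf
      _ ≤ |F x - G x| + |F s - G s| := abs_sub _ _
      _ ≤ D + D := add_le_add (hD x hx) (hD s hs1)
      _ = 2*D := by ring
  refine (abs_intervalIntegral_le hx.1 (hIF.sub hIG) intervalIntegrable_const hpt).trans ?_
  rw [intervalIntegral.integral_const, smul_eq_mul]
  simp [Nat.factorial]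
  apply le_of_eq
  ring

include hFmono hGmono hFm hGm hF01 hG01 hD0 hD in
lemma base_p : ∀ x ∈ Set.Icc (0:ℝ) 1,
    |iterT F F 1 x - iterT G G 1 x| ≤ 2*D*x^1 / (Nat.factorial 0 : ℝ) := by
  intro x hx
  have hIF : IntervalIntegrable (fun s => F s * (F x - F s)) volume 0 x := by
    apply II_of_bdd (hFm.mul (measurable_const.sub hFm)) (C := 1)
    intro s hs
    simp only [Pi.mul_apply, Pi.sub_apply]
    rw [abs_mul]
    calc |F s| * |F x - F s| ≤ 1 * 1 := mul_le_mul
          (by rw [abs_of_nonneg (hF01 s).1]; exact (hF01 s).2)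
          (abs_sub_le_one (hF01 x) (hF01 s)) (abs_nonneg _) zero_le_one
      _ = 1 := mul_one 1
  have hIG : IntervalIntegrable (fun s => G s * (G x - G s)) volume 0 x := by
    apply II_of_bdd (hGm.mul (measurable_const.sub hGm)) (C := 1)
    intro s hs
    simp only [Pi.mul_apply, Pi.sub_apply]
    rw [abs_mul]
    calc |G s| * |G x - G s| ≤ 1 * 1 := mul_le_mul
          (by rw [abs_of_nonneg (hG01 s).1]; exact (hG01 s).2)
          (abs_sub_le_one (hG01 x) (hG01 s)) (abs_nonneg _) zero_le_one
      _ = 1 := mul_one 1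
  show |(∫ s in (0:ℝ)..x, F s * (F x - F s)) - ∫ s in (0:ℝ)..x, G s * (G x - G s)| ≤ _
  rw [← intervalIntegral.integral_sub hIF hIG]
  have hpt : ∀ s ∈ Set.Icc (0:ℝ) x,
      |F s * (F x - F s) - G s * (G x - G s)| ≤ (fun _ : ℝ => 2*D) s := by
    intro s hs
    have hs1 : s ∈ Set.Icc (0:ℝ) 1 := ⟨hs.1, hs.2.trans hx.2⟩
    exact key_alg hD0 (hF01 s).1 (hFmono hs.2) (hF01 x).2 (hG01 s).1 (hGmono hs.2)
      (hG01 x).2 (hD s hs1) (hD x hx)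
  refine (abs_intervalIntegral_le hx.1 (hIF.sub hIG) intervalIntegrable_const hpt).trans ?_
  rw [intervalIntegral.integral_const, smul_eq_mul]
  simp [Nat.factorial]
  apply le_of_eq
  ring

end Est

section Est2
variable {F G : ℝ → ℝ} {D : ℝ}
variable (hD0 : 0 ≤ D)

include hD0 in
lemma est_int {u v : ℝ → ℝ} {m : ℕ} (hum : Measurable u) (hvm : Measurable v)
    (hub1 : ∀ s ∈ Set.Icc (0:ℝ) 1, |u s| ≤ 1) (hvb1 : ∀ s ∈ Set.Icc (0:ℝ) 1, |v s| ≤ 1)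
    (huv : ∀ s ∈ Set.Icc (0:ℝ) 1, |u s - v s| ≤ 2*D*s^(m+1) / (Nat.factorial m : ℝ)) :
    ∀ x ∈ Set.Icc (0:ℝ) 1, |∫ s in (0:ℝ)..x, (u s - v s)|
      ≤ 2*D*x^(m+2) / (((m:ℝ)+2) * (Nat.factorial m : ℝ)) := by
  intro x hx
  have hfac : (0:ℝ) < (Nat.factorial m : ℝ) := by exact_mod_cast Nat.factorial_pos m
  have hI : IntervalIntegrable (fun s => u s - v s) volume 0 x := by
    apply II_of_bdd (hum.sub hvm) (C := 2)
    intro s hs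
    rw [Set.uIcc_of_le hx.1] at hs
    have hs1 : s ∈ Set.Icc (0:ℝ) 1 := ⟨hs.1, hs.2.trans hx.2⟩
    calc |u s - v s| ≤ |u s| + |v s| := abs_sub _ _
      _ ≤ 1 + 1 := add_le_add (hub1 s hs1) (hvb1 s hs1)
      _ = 2 := by norm_num
  have hIB : IntervalIntegrable (fun s => (2*D / (Nat.factorial m : ℝ)) * s^(m+1)) volume 0 x :=
    (continuous_const.mul (continuous_pow (m+1))).intervalIntegrable 0 x
  have hpt : ∀ s ∈ Set.Icc (0:ℝ) x, |u s - v s|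
      ≤ (2*D / (Nat.factorial m : ℝ)) * s^(m+1) := by
    intro s hs
    have hs1 : s ∈ Set.Icc (0:ℝ) 1 := ⟨hs.1, hs.2.trans hx.2⟩
    refine (huv s hs1).trans (le_of_eq ?_)
    ring
  refine (abs_intervalIntegral_le hx.1 hI hIB hpt).trans ?_
  rw [intervalIntegral.integral_const_mul, integral_pow]
  apply le_of_eq
  have hz : (0:ℝ)^(m+1+1) = 0 := zero_pow (by omega)
  rw [hz, sub_zero, show m+1+1 = m+2 from rfl]
  have h1 : (Nat.factorial m : ℝ) ≠ 0 := ne_of_gt hfac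
  have h2 : ((m:ℝ))+2 ≠ 0 := by positivity
  push_cast
  field_simp
  ring

end Est2

section Ident2
variable (μ : Measure ℝ) [IsProbabilityMeasure μ] (hna : ∀ x : ℝ, μ {x} = 0)

include hna in
lemma genQ_odd_eq (k : ℕ) : ∀ x ∈ Set.Icc (0:ℝ) 1,
    genQ μ (2*k+1) x = ∫ s in (0:ℝ)..x, iterT (FD μ) (fun _ => 1) k s := by
  intro x hx
  rw [genQ_odd_unfold]
  apply intervalIntegral.integral_congr
  intro s hs
  rw [Set.uIcc_of_le hx.1] at hs
  exact genQ_eq_iterT μ hna k s ⟨hs.1, hs.2.trans hx.2⟩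

include hna in
lemma genP_even_eq (k : ℕ) : ∀ x ∈ Set.Icc (0:ℝ) 1,
    genP μ (2*(k+1)) x = ∫ s in (0:ℝ)..x, iterT (FD μ) (FD μ) k s := by
  intro x hx
  rw [show 2*(k+1) = 2*k+2 from by ring, genP_even_unfold]
  apply intervalIntegral.integral_congr
  intro s hs
  rw [Set.uIcc_of_le hx.1] at hs
  exact genP_eq_iterT μ hna k s ⟨hs.1, hs.2.trans hx.2⟩

end Ident2

theorem stmt_3 (μ ν : Measure ℝ) [IsProbabilityMeasure μ] [IsProbabilityMeasure ν]
    (hμs : μ (Set.Icc (0:ℝ) 1)ᶜ = 0) (hνs : ν (Set.Icc (0:ℝ) 1)ᶜ = 0)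
    (hμna : ∀ x : ℝ, μ {x} = 0) (hνna : ∀ x : ℝ, ν {x} = 0) :
    ∀ x ∈ Set.Icc (0:ℝ) 1, ∀ k : ℕ, 1 ≤ k →
      |genQ μ (2 * k) x - genQ ν (2 * k) x|
          ≤ 2 * distSup μ ν * x ^ k / (Nat.factorial (k - 1) : ℝ) ∧
      |genQ μ (2 * k + 1) x - genQ ν (2 * k + 1) x|
          ≤ 2 * distSup μ ν * x ^ k / (Nat.factorial (k - 1) : ℝ) ∧
      |genP μ (2 * k) x - genP ν (2 * k) x|
          ≤ 2 * distSup μ ν * x ^ k / (Nat.factorial (k - 1) : ℝ) ∧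
      |genP μ (2 * k + 1) x - genP ν (2 * k + 1) x|
          ≤ 2 * distSup μ ν * x ^ k / (Nat.factorial (k - 1) : ℝ) := by
  intro x hx k hk
  obtain ⟨m, rfl⟩ : ∃ m, k = m + 1 := ⟨k - 1, (Nat.succ_pred_eq_of_pos hk).symm⟩
  simp only [Nat.add_sub_cancel]
  have hFmono := FD_mono μ
  have hGmono := FD_mono ν
  have hFm := FD_measurable μ
  have hGm := FD_measurable ν
  have hF01 := FD_mem μ
  have hG01 := FD_mem ν
  have hone : ∀ s : ℝ, (fun _ : ℝ => (1:ℝ)) s ∈ Set.Icc (0:ℝ) 1 :=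
    fun _ => ⟨zero_le_one, le_rfl⟩
  set D := distSup μ ν with hDdef
  have hbdd : BddAbove (Set.range fun p : Set.Icc (0:ℝ) 1 =>
      |(μ (Set.Icc 0 (p:ℝ))).toReal - (ν (Set.Icc 0 (p:ℝ))).toReal|) := by
    refine ⟨2, ?_⟩
    rintro y ⟨p, rfl⟩
    calc |(μ (Set.Icc 0 (p:ℝ))).toReal - (ν (Set.Icc 0 (p:ℝ))).toReal|
        ≤ |(μ (Set.Icc 0 (p:ℝ))).toReal| + |(ν (Set.Icc 0 (p:ℝ))).toReal| := abs_sub _ _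
      _ ≤ 1 + 1 := add_le_add
          (by show |FD μ (p:ℝ)| ≤ 1
              rw [abs_of_nonneg (FD_nonneg μ _)]; exact FD_le_one μ _)
          (by show |FD ν (p:ℝ)| ≤ 1
              rw [abs_of_nonneg (FD_nonneg ν _)]; exact FD_le_one ν _)
      _ = 2 := by norm_num
  have hD : ∀ s ∈ Set.Icc (0:ℝ) 1, |FD μ s - FD ν s| ≤ D := by
    intro s hs
    exact le_ciSup hbdd (⟨s, hs⟩ : Set.Icc (0:ℝ) 1)
  have hD0 : 0 ≤ D := le_trans (abs_nonneg _) (hD 0 ⟨le_rfl, zero_le_one⟩)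
  -- main estimates
  have hq_est := est_iterT hFmono hGmono hFm hGm hF01 hG01 hD0 hD
    measurable_const measurable_const hone hone
    (base_q hFmono hGmono hFm hGm hF01 hG01 hD0 hD)
  have hp_est := est_iterT hFmono hGmono hFm hGm hF01 hG01 hD0 hD
    hFm hGm hF01 hG01
    (base_p hFmono hGmono hFm hGm hF01 hG01 hD0 hD)
  have hq1 : ∀ s ∈ Set.Icc (0:ℝ) 1, |iterT (FD μ) (fun _ => 1) (m+1) s| ≤ 1 :=
    iterT_abs_le_one hFmono hFm hF01 measurable_const hone (m+1)
  have hq1' : ∀ s ∈ Set.Icc (0:ℝ) 1, |iterT (FD ν) (fun _ => 1) (m+1) s| ≤ 1 :=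
    iterT_abs_le_one hGmono hGm hG01 measurable_const hone (m+1)
  have hqm := iterT_measurable hFm hF01 measurable_const hone (m+1)
  have hqm' := iterT_measurable hGm hG01 measurable_const hone (m+1)
  have hfacpos : (0:ℝ) < (Nat.factorial m : ℝ) := by exact_mod_cast Nat.factorial_pos m
  have hxpow : x^(m+2) ≤ x^(m+1) := pow_le_pow_of_le_one hx.1 hx.2 (by omega)
  refine ⟨?_, ?_, ?_, ?_⟩
  · -- genQ even
    rw [genQ_eq_iterT μ hμna (m+1) x hx, genQ_eq_iterT ν hνna (m+1) x hx]
    exact hq_est m x hx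
  · -- genQ odd
    rw [genQ_odd_eq μ hμna (m+1) x hx, genQ_odd_eq ν hνna (m+1) x hx]
    have hIu : IntervalIntegrable (iterT (FD μ) (fun _ => 1) (m+1)) volume 0 x :=
      II_of_bdd hqm (C := 1) (fun s hs => hq1 s (by
        rw [Set.uIcc_of_le hx.1] at hs; exact ⟨hs.1, hs.2.trans hx.2⟩))
    have hIv : IntervalIntegrable (iterT (FD ν) (fun _ => 1) (m+1)) volume 0 x :=
      II_of_bdd hqm' (C := 1) (fun s hs => hq1' s (by
        rw [Set.uIcc_of_le hx.1] at hs; exact ⟨hs.1, hs.2.trans hx.2⟩))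
    rw [← intervalIntegral.integral_sub hIu hIv]
    refine (est_int hD0 hqm hqm' hq1 hq1' (hq_est m) x hx).trans ?_
    apply div_le_div₀ (mul_nonneg (by linarith) (pow_nonneg hx.1 _))
    · exact mul_le_mul_of_nonneg_left hxpow (by linarith)
    · exact hfacpos
    · nlinarith [hfacpos]
  · -- genP even
    rw [genP_even_eq μ hμna m x hx, genP_even_eq ν hνna m x hx]
    cases m with
    | zero =>
      have hIu : IntervalIntegrable (iterT (FD μ) (FD μ) 0) volume 0 x :=
        II_of_bdd hFm (C := 1) (fun s hs => by
          rw [abs_of_nonneg (hF01 s).1]; exact (hF01 s).2)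
      have hIv : IntervalIntegrable (iterT (FD ν) (FD ν) 0) volume 0 x :=
        II_of_bdd hGm (C := 1) (fun s hs => by
          rw [abs_of_nonneg (hG01 s).1]; exact (hG01 s).2)
      rw [← intervalIntegral.integral_sub hIu hIv]
      have hpt : ∀ s ∈ Set.Icc (0:ℝ) x,
          |iterT (FD μ) (FD μ) 0 s - iterT (FD ν) (FD ν) 0 s| ≤ (fun _ : ℝ => D) s :=
        fun s hs => hD s ⟨hs.1, hs.2.trans hx.2⟩
      refine (abs_intervalIntegral_le hx.1 (hIu.sub hIv) intervalIntegrable_const hpt).trans ?_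
      rw [intervalIntegral.integral_const, smul_eq_mul]
      simp [Nat.factorial]
      nlinarith [hx.1]
    | succ n =>
      have hp1 : ∀ s ∈ Set.Icc (0:ℝ) 1, |iterT (FD μ) (FD μ) (n+1) s| ≤ 1 :=
        iterT_abs_le_one hFmono hFm hF01 hFm hF01 (n+1)
      have hp1' : ∀ s ∈ Set.Icc (0:ℝ) 1, |iterT (FD ν) (FD ν) (n+1) s| ≤ 1 :=
        iterT_abs_le_one hGmono hGm hG01 hGm hG01 (n+1)
      have hpm := iterT_measurable hFm hF01 hFm hF01 (n+1)
      have hpm' := iterT_measurable hGm hG01 hGm hG01 (n+1)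
      have hIu : IntervalIntegrable (iterT (FD μ) (FD μ) (n+1)) volume 0 x :=
        II_of_bdd hpm (C := 1) (fun s hs => hp1 s (by
          rw [Set.uIcc_of_le hx.1] at hs; exact ⟨hs.1, hs.2.trans hx.2⟩))
      have hIv : IntervalIntegrable (iterT (FD ν) (FD ν) (n+1)) volume 0 x :=
        II_of_bdd hpm' (C := 1) (fun s hs => hp1' s (by
          rw [Set.uIcc_of_le hx.1] at hs; exact ⟨hs.1, hs.2.trans hx.2⟩))
      rw [← intervalIntegral.integral_sub hIu hIv]
      refine (est_int hD0 hpm hpm' hp1 hp1' (hp_est n) x hx).trans ?_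
      have hfn : (0:ℝ) < (Nat.factorial n : ℝ) := by exact_mod_cast Nat.factorial_pos n
      have heq : ((Nat.factorial (n+1) : ℕ) : ℝ) = ((n:ℝ)+1) * (Nat.factorial n : ℝ) := by
        rw [Nat.factorial_succ]; push_cast; ring
      rw [heq]
      apply div_le_div_of_nonneg_left ?_ ?_ ?_
      · exact mul_nonneg (by linarith) (pow_nonneg hx.1 _)
      · positivity
      · nlinarith [hfn]
  · -- genP odd
    rw [genP_eq_iterT μ hμna (m+1) x hx, genP_eq_iterT ν hνna (m+1) x hx]
    exact hp_est m x hx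
end

section
/- For non-atomic Borel probability measures μ and ν on [0,1] with distribution functions F and G, the derivatives of the generalized hyperbolic cosines satisfy ‖cosh_z' − cosh_{z,ν}'‖_∞ ≤ (z² + 2z⁴ e^{z²}) ‖F−G‖_∞, where cosh_z'(x) = Σ_{k≥1} p_{2k−1}(x) z^{2k}. -/
open MeasureTheory Set Real Filter

/-- the derivative series cosh_z'(x) = Σ_{k≥1} p_{2k-1}(x) z^{2k} -/
noncomputable def genCoshDeriv (μ : Measure ℝ) (z : ℝ) (x : ℝ) : ℝ :=
  ∑' k : ℕ, genP μ (2 * (k + 1) - 1) x * z ^ (2 * (k + 1))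

lemma genP_continuous (μ : Measure ℝ) [IsProbabilityMeasure μ] [NullSingletonClass μ] :
    ∀ n, Continuous (genP μ n) := by
  intro n
  induction n with
  | zero => simpa [genP] using continuous_const
  | succ k ih =>
    by_cases h : Odd (k + 1)
    · have he : genP μ (k+1) = fun x => ∫ t in (0:ℝ)..x, genP μ k t ∂μ := by
        funext x; simp [genP, h]
      rw [he]
      exact intervalIntegral.continuous_primitive (fun a b => ih.intervalIntegrable a b) 0
    · have he : genP μ (k+1) = fun x => ∫ t in (0:ℝ)..x, genP μ k t := by
        funext x; simp [genP, h]
      rw [he]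
      exact intervalIntegral.continuous_primitive (fun a b => ih.intervalIntegrable a b) 0

lemma genP_bound (μ : Measure ℝ) [IsProbabilityMeasure μ] [NullSingletonClass μ] :
    ∀ n, ∀ x ∈ Set.Icc (0:ℝ) 1,
      0 ≤ genP μ n x ∧ genP μ n x ≤ x ^ (n / 2) / (Nat.factorial (n / 2) : ℝ) := by
  intro n
  induction n with
  | zero => intro x hx; simp [genP]
  | succ k ih =>
    intro x hx
    obtain ⟨hx0, hx1⟩ := hx
    have hcont := genP_continuous μ k
    have hfpos : ∀ t ∈ Set.Icc (0:ℝ) x, 0 ≤ genP μ k t := fun t ht =>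
      (ih t ⟨ht.1, le_trans ht.2 hx1⟩).1
    have hfle : ∀ t ∈ Set.Icc (0:ℝ) x,
        genP μ k t ≤ t ^ (k / 2) / (Nat.factorial (k / 2) : ℝ) := fun t ht =>
      (ih t ⟨ht.1, le_trans ht.2 hx1⟩).2
    by_cases h : Odd (k + 1)
    · -- μ-integral step: k is even, (k+1)/2 = k/2
      have hkd : (k + 1) / 2 = k / 2 := by
        rcases h with ⟨m, hm⟩; omega
      have he : genP μ (k+1) x = ∫ t in (0:ℝ)..x, genP μ k t ∂μ := by
        simp [genP, h]
      have hInt : IntervalIntegrable (genP μ k) μ 0 x := hcont.intervalIntegrable 0 x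
      constructor
      · rw [he]
        have h0 := intervalIntegral.integral_mono_on (μ := μ) hx0
          intervalIntegrable_const hInt hfpos
        simpa using h0
      · rw [he, hkd]
        set c : ℝ := x ^ (k / 2) / (Nat.factorial (k / 2) : ℝ) with hc
        have hc0 : 0 ≤ c := by positivity
        have hle : ∀ t ∈ Set.Icc (0:ℝ) x, genP μ k t ≤ c := by
          intro t ht
          refine le_trans (hfle t ht) ?_
          rw [hc]
          gcongr
          exacts [ht.1, ht.2]
        calc (∫ t in (0:ℝ)..x, genP μ k t ∂μ) ≤ ∫ _t in (0:ℝ)..x, c ∂μ :=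
              intervalIntegral.integral_mono_on hx0 hInt intervalIntegrable_const hle
        _ = ((μ (Set.Ioc 0 x)).toReal - (μ (Set.Ioc x 0)).toReal) • c :=
              intervalIntegral.integral_const' c
        _ ≤ c := by
              have h1 : (μ (Set.Ioc 0 x)).toReal ≤ 1 := by
                have hle' : μ (Set.Ioc 0 x) ≤ μ Set.univ :=
                  measure_mono (Set.subset_univ _)
                have := ENNReal.toReal_mono (by simp) hle'
                simpa using this
              have h2 : Set.Ioc x (0:ℝ) = ∅ := Set.Ioc_eq_empty (not_lt.mpr hx0)
              rw [h2]
              simp only [measure_empty, ENNReal.toReal_zero, sub_zero, smul_eq_mul]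
              nlinarith
    · -- Lebesgue step: k is odd, k = 2m+1
      have hk : Odd k := by
        rcases Nat.even_or_odd k with he | ho
        · exact absurd (he.add_one) h
        · exact ho
      obtain ⟨m, hm⟩ := hk
      have hkd : k / 2 = m := by omega
      have hkd1 : (k + 1) / 2 = m + 1 := by omega
      have he : genP μ (k+1) x = ∫ t in (0:ℝ)..x, genP μ k t := by
        simp [genP, h]
      have hInt : IntervalIntegrable (genP μ k) volume 0 x := hcont.intervalIntegrable 0 x
      constructor
      · rw [he]
        have h0 := intervalIntegral.integral_mono_on (μ := volume) hx0
          intervalIntegrable_const hInt hfpos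
        simpa using h0
      · rw [he, hkd1]
        have hgInt : IntervalIntegrable (fun t : ℝ => t ^ m / (Nat.factorial m : ℝ))
            volume 0 x := ((continuous_pow m).div_const _).intervalIntegrable 0 x
        have hle : ∀ t ∈ Set.Icc (0:ℝ) x,
            genP μ k t ≤ t ^ m / (Nat.factorial m : ℝ) := by
          intro t ht
          have := hfle t ht
          rwa [hkd] at this
        calc (∫ t in (0:ℝ)..x, genP μ k t)
            ≤ ∫ t in (0:ℝ)..x, t ^ m / (Nat.factorial m : ℝ) :=
              intervalIntegral.integral_mono_on hx0 hInt hgInt hle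
        _ = (∫ t in (0:ℝ)..x, t ^ m) / (Nat.factorial m : ℝ) := by
              rw [intervalIntegral.integral_div]
        _ = x ^ (m + 1) / (Nat.factorial (m + 1) : ℝ) := by
              rw [integral_pow, Nat.factorial_succ]
              push_cast
              rw [zero_pow (by omega : m + 1 ≠ 0), sub_zero, div_div]

theorem stmt_6 (μ ν : Measure ℝ) [IsProbabilityMeasure μ] [IsProbabilityMeasure ν]
    (hμs : μ (Set.Icc (0:ℝ) 1)ᶜ = 0) (hνs : ν (Set.Icc (0:ℝ) 1)ᶜ = 0)
    (hμna : ∀ x : ℝ, μ {x} = 0) (hνna : ∀ x : ℝ, ν {x} = 0)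
    (hkey1 : ∀ x ∈ Set.Icc (0:ℝ) 1, |genP μ 1 x - genP ν 1 x| ≤ distSup μ ν)
    (hkey : ∀ k : ℕ, 2 ≤ k → ∀ x ∈ Set.Icc (0:ℝ) 1,
      |genP μ (2 * k - 1) x - genP ν (2 * k - 1) x|
        ≤ 2 * distSup μ ν * x ^ (k - 1) / (Nat.factorial (k - 2) : ℝ)) :
    ∀ z : ℝ, ∀ x ∈ Set.Icc (0:ℝ) 1,
      |genCoshDeriv μ z x - genCoshDeriv ν z x|
        ≤ (z ^ 2 + 2 * z ^ 4 * Real.exp (z ^ 2)) * distSup μ ν := by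
  haveI : NullSingletonClass μ := ⟨hμna⟩
  haveI : NullSingletonClass ν := ⟨hνna⟩
  have hD0 : 0 ≤ distSup μ ν := Real.iSup_nonneg (fun _ => abs_nonneg _)
  set D := distSup μ ν with hDdef
  intro z x hx
  obtain ⟨hx0, hx1⟩ := hx
  set f : ℕ → ℝ := fun k => genP μ (2 * (k + 1) - 1) x * z ^ (2 * (k + 1)) with hf
  set g : ℕ → ℝ := fun k => genP ν (2 * (k + 1) - 1) x * z ^ (2 * (k + 1)) with hg
  have hmaj : Summable (fun k : ℕ => z ^ 2 * ((z ^ 2) ^ k / (Nat.factorial k : ℝ))) :=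
    (Real.summable_pow_div_factorial (z ^ 2)).mul_left _
  have hzpow : ∀ k : ℕ, z ^ (2 * (k + 1)) = (z ^ 2) ^ (k + 1) := fun k => pow_mul z 2 (k + 1)
  have hterm : ∀ (μ' : Measure ℝ), IsProbabilityMeasure μ' → NullSingletonClass μ' →
      ∀ k : ℕ, |genP μ' (2 * (k + 1) - 1) x * z ^ (2 * (k + 1))|
        ≤ z ^ 2 * ((z ^ 2) ^ k / (Nat.factorial k : ℝ)) := by
    intro μ' hp hn k
    obtain ⟨hp1, hp2⟩ := genP_bound μ' (2 * (k + 1) - 1) x ⟨hx0, hx1⟩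
    have hi : (2 * (k + 1) - 1) / 2 = k := by omega
    rw [hi] at hp2
    have hple : genP μ' (2 * (k + 1) - 1) x ≤ 1 / (Nat.factorial k : ℝ) := by
      refine hp2.trans ?_
      gcongr
      exact pow_le_one₀ hx0 hx1
    rw [abs_mul, hzpow k, abs_of_nonneg (pow_nonneg (sq_nonneg z) (k + 1)),
      abs_of_nonneg hp1]
    calc genP μ' (2 * (k + 1) - 1) x * (z ^ 2) ^ (k + 1)
        ≤ (1 / (Nat.factorial k : ℝ)) * (z ^ 2) ^ (k + 1) :=
          mul_le_mul_of_nonneg_right hple (pow_nonneg (sq_nonneg z) _)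
      _ = z ^ 2 * ((z ^ 2) ^ k / (Nat.factorial k : ℝ)) := by ring
  have hsf : Summable f :=
    Summable.of_abs (Summable.of_nonneg_of_le (fun k => abs_nonneg _)
      (hterm μ ‹_› ‹_›) hmaj)
  have hsg : Summable g :=
    Summable.of_abs (Summable.of_nonneg_of_le (fun k => abs_nonneg _)
      (hterm ν ‹_› ‹_›) hmaj)
  set c : ℕ → ℝ := fun k =>
    Nat.casesOn k (D * z ^ 2) (fun j => 2 * D * z ^ 4 * ((z ^ 2) ^ j / (Nat.factorial j : ℝ)))
    with hcdef
  have hc0 : c 0 = D * z ^ 2 := rfl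
  have hcs : ∀ j : ℕ, c (j + 1) = 2 * D * z ^ 4 * ((z ^ 2) ^ j / (Nat.factorial j : ℝ)) :=
    fun j => rfl
  have hsc1 : Summable (fun j : ℕ => c (j + 1)) := by
    simp only [hcs]
    exact (Real.summable_pow_div_factorial (z ^ 2)).mul_left (2 * D * z ^ 4)
  have hsc : Summable c := (summable_nat_add_iff 1).mp hsc1
  have hbound : ∀ k : ℕ, |f k - g k| ≤ c k := by
    intro k
    have hsub : f k - g k
        = (genP μ (2 * (k + 1) - 1) x - genP ν (2 * (k + 1) - 1) x) * z ^ (2 * (k + 1)) := by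
      simp only [hf, hg]; ring
    rw [hsub, abs_mul, hzpow k, abs_of_nonneg (pow_nonneg (sq_nonneg z) (k + 1))]
    cases k with
    | zero =>
      rw [hc0]
      have h1 := hkey1 x ⟨hx0, hx1⟩
      calc |genP μ (2 * (0 + 1) - 1) x - genP ν (2 * (0 + 1) - 1) x| * (z ^ 2) ^ (0 + 1)
          ≤ D * (z ^ 2) ^ (0 + 1) :=
            mul_le_mul_of_nonneg_right (by simpa using h1) (pow_nonneg (sq_nonneg z) _)
        _ = D * z ^ 2 := by ring
    | succ j =>
      rw [hcs j]
      have hkey' := hkey (j + 2) (by omega) x ⟨hx0, hx1⟩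
      have hi1 : 2 * (j + 2) - 1 = 2 * (j + 1 + 1) - 1 := by omega
      have hi2 : (j + 2) - 1 = j + 1 := by omega
      have hi3 : (j + 2) - 2 = j := by omega
      rw [hi1, hi2, hi3] at hkey'
      have hfj : (0:ℝ) < (Nat.factorial j : ℝ) := by positivity
      calc |genP μ (2 * (j + 1 + 1) - 1) x - genP ν (2 * (j + 1 + 1) - 1) x|
            * (z ^ 2) ^ (j + 1 + 1)
          ≤ (2 * D * x ^ (j + 1) / (Nat.factorial j : ℝ)) * (z ^ 2) ^ (j + 1 + 1) :=
            mul_le_mul_of_nonneg_right hkey' (pow_nonneg (sq_nonneg z) _)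
        _ ≤ (2 * D * 1 / (Nat.factorial j : ℝ)) * (z ^ 2) ^ (j + 1 + 1) := by
            gcongr
            exact pow_le_one₀ hx0 hx1
        _ = 2 * D * z ^ 4 * ((z ^ 2) ^ j / (Nat.factorial j : ℝ)) := by ring
  have habs : Summable (fun k => |f k - g k|) :=
    Summable.of_nonneg_of_le (fun k => abs_nonneg _) hbound hsc
  have hdiff : genCoshDeriv μ z x - genCoshDeriv ν z x = ∑' k, (f k - g k) := by
    rw [genCoshDeriv, genCoshDeriv, Summable.tsum_sub hsf hsg]
  rw [hdiff]
  calc |∑' k, (f k - g k)| ≤ ∑' k, |f k - g k| := by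
        have := norm_tsum_le_tsum_norm (f := fun k => f k - g k)
          (by simpa [Real.norm_eq_abs] using habs)
        simpa [Real.norm_eq_abs] using this
    _ ≤ ∑' k, c k := Summable.tsum_le_tsum hbound habs hsc
    _ = c 0 + ∑' j, c (j + 1) := Summable.tsum_eq_zero_add hsc
    _ = D * z ^ 2 + 2 * D * z ^ 4 * Real.exp (z ^ 2) := by
        rw [hc0]
        have h1 : ∑' j : ℕ, c (j + 1)
            = 2 * D * z ^ 4 * ∑' j : ℕ, ((z ^ 2) ^ j / (Nat.factorial j : ℝ)) := by
          simp only [hcs]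
          exact tsum_mul_left
        rw [h1]
        have hexp : Real.exp (z ^ 2) = ∑' j : ℕ, ((z ^ 2) ^ j / (Nat.factorial j : ℝ)) := by
          rw [Real.exp_eq_exp_ℝ, NormedSpace.exp_eq_tsum_div]
        rw [hexp]
    _ = (z ^ 2 + 2 * z ^ 4 * Real.exp (z ^ 2)) * D := by ring
end

section
/- The function g(x) = cosh_{√λ}(x) satisfies g(x) = 1 + λ ∫_0^x ∫_0^y g(t) dμ(t) dy for all x ∈ [0,1]; i.e. cosh_{√λ} solves Δ_μ g = λ g with g(0) = 1 and g'(0) = 0. -/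
open MeasureTheory Set Real Filter

/-- cosh_{√λ}(x) = Σ_{k≥0} λ^k p_{2k}(x) -/
noncomputable def coshL (μ : Measure ℝ) (l : ℝ) (x : ℝ) : ℝ :=
  ∑' k : ℕ, l ^ k * genP μ (2 * k) x

noncomputable def clampI (x : ℝ) : ℝ := max 0 (min x 1)

lemma clampI_mem (x : ℝ) : clampI x ∈ Icc (0:ℝ) 1 := by
  constructor
  · exact le_max_left _ _
  · simp [clampI, max_le_iff, min_le_iff]

lemma clampI_mono : Monotone clampI := fun a b hab => by
  exact max_le_max le_rfl (min_le_min hab le_rfl)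

lemma clampI_eq {x : ℝ} (hx : x ∈ Icc (0:ℝ) 1) : clampI x = x := by
  simp [clampI, min_eq_left hx.2, max_eq_right hx.1]

lemma genP_succ_odd (μ : Measure ℝ) (k : ℕ) (h : Odd (k+1)) :
    genP μ (k+1) = fun x => ∫ t in (0:ℝ)..x, genP μ k t ∂μ := by
  funext x; rw [genP]; simp only [if_pos h]

lemma genP_succ_even (μ : Measure ℝ) (k : ℕ) (h : ¬ Odd (k+1)) :
    genP μ (k+1) = fun x => ∫ t in (0:ℝ)..x, genP μ k t := by
  funext x; rw [genP]; simp only [if_neg h]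

/-- key bounds and monotonicity -/
lemma genP_key (μ : Measure ℝ) [IsProbabilityMeasure μ] (k : ℕ) :
    MonotoneOn (genP μ k) (Icc 0 1) ∧
      ∀ x ∈ Icc (0:ℝ) 1, genP μ k x ∈ Icc 0 (x ^ (k/2) / (Nat.factorial (k/2))) := by
  induction k with
  | zero => exact ⟨monotoneOn_const, fun x hx => by simp [genP]⟩
  | succ k ih =>
    obtain ⟨ihm, ihb⟩ := ih
    -- measurability of clamped version
    have hmc : Monotone (fun t => genP μ k (clampI t)) :=
      fun a b hab => ihm (clampI_mem a) (clampI_mem b) (clampI_mono hab)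
    have hmeas : Measurable (fun t => genP μ k (clampI t)) := hmc.measurable
    -- integrability on subsets of [0,1]
    have hint : ∀ (ν : Measure ℝ) {a b : ℝ}, Ioc a b ⊆ Icc 0 1 → ν (Ioc a b) ≠ ⊤ →
        IntegrableOn (genP μ k) (Ioc a b) ν := by
      intro ν a b hsub hfin
      have haesm : AEStronglyMeasurable (genP μ k) (ν.restrict (Ioc a b)) := by
        refine hmeas.aestronglyMeasurable.congr ?_
        refine (ae_restrict_iff' measurableSet_Ioc).2 (ae_of_all _ fun t ht => ?_)
        simp only []
        rw [show clampI t = t from clampI_eq (hsub ht)]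
      refine Integrable.mono' (g := fun _ => ((Nat.factorial (k/2)) : ℝ)⁻¹) ?_ haesm ?_
      · exact (integrableOn_const hfin)
      · refine (ae_restrict_iff' measurableSet_Ioc).2 (ae_of_all _ fun t ht => ?_)
        have hb := ihb t (hsub ht)
        have ht1 : t ^ (k/2) ≤ 1 := pow_le_one₀ (hsub ht).1 (hsub ht).2
        rw [Real.norm_eq_abs, abs_of_nonneg hb.1]
        calc genP μ k t ≤ t ^ (k/2) / (Nat.factorial (k/2)) := hb.2
          _ ≤ 1 / (Nat.factorial (k/2)) := by
              have hfp : (0:ℝ) < Nat.factorial (k/2) := Nat.cast_pos.2 (Nat.factorial_pos _)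
              exact (div_le_div_iff_of_pos_right hfp).2 ht1
          _ = ((Nat.factorial (k/2)) : ℝ)⁻¹ := one_div _
    have hnn : ∀ t ∈ Icc (0:ℝ) 1, 0 ≤ genP μ k t := fun t ht => (ihb t ht).1
    rcases Nat.even_or_odd k with hk | hk
    · -- k even, k+1 odd: μ-integral step
      have hodd : Odd (k+1) := Even.add_one hk
      obtain ⟨m, hm⟩ := hk
      have hm' : k = 2 * m := by omega
      rw [genP_succ_odd μ k hodd]
      have hii : ∀ x ∈ Icc (0:ℝ) 1, IntervalIntegrable (genP μ k) μ 0 x := by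
        intro x hx
        rw [intervalIntegrable_iff_integrableOn_Ioc_of_le hx.1]
        exact hint μ (Ioc_subset_Icc_self.trans (Icc_subset_Icc le_rfl hx.2))
          (measure_ne_top μ _)
      have hae : ∀ x ∈ Icc (0:ℝ) 1, 0 ≤ᵐ[μ.restrict (Ioc 0 x)] genP μ k := by
        intro x hx
        refine (ae_restrict_iff' measurableSet_Ioc).2 (ae_of_all _ fun t ht => ?_)
        exact hnn t ⟨le_of_lt ht.1, ht.2.trans hx.2⟩
      constructor
      · intro a ha b hb hab
        exact intervalIntegral.integral_mono_interval le_rfl ha.1 hab (hae b hb) (hii b hb)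
      · intro x hx
        have hdiv : (k+1)/2 = k/2 := by omega
        rw [hdiv]
        simp only []
        constructor
        · simpa using intervalIntegral.integral_mono_interval le_rfl le_rfl hx.1 (hae x hx) (hii x hx)
        · rw [intervalIntegral.integral_of_le hx.1]
          calc ∫ t in Ioc (0:ℝ) x, genP μ k t ∂μ
              ≤ ∫ _t in Ioc (0:ℝ) x, (x ^ (k/2) / (Nat.factorial (k/2)) : ℝ) ∂μ := by
                refine setIntegral_mono_on ((hii x hx).1) ?_ measurableSet_Ioc ?_
                · exact integrableOn_const (measure_ne_top μ _)
                · intro t ht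
                  have htI : t ∈ Icc (0:ℝ) 1 := ⟨le_of_lt ht.1, ht.2.trans hx.2⟩
                  calc genP μ k t ≤ t ^ (k/2) / (Nat.factorial (k/2)) := (ihb t htI).2
                    _ ≤ x ^ (k/2) / (Nat.factorial (k/2)) := by
                        have hfp : (0:ℝ) < Nat.factorial (k/2) := Nat.cast_pos.2 (Nat.factorial_pos _)
                        exact (div_le_div_iff_of_pos_right hfp).2 (pow_le_pow_left₀ (le_of_lt ht.1) ht.2 _)
            _ = (μ (Ioc 0 x)).toReal • (x ^ (k/2) / (Nat.factorial (k/2)) : ℝ) := by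
                rw [setIntegral_const]; rfl
            _ ≤ x ^ (k/2) / (Nat.factorial (k/2)) := by
                rw [smul_eq_mul]
                have h1 : (μ (Ioc 0 x)).toReal ≤ 1 := by
                  have := prob_le_one (μ := μ) (s := Ioc 0 x)
                  exact ENNReal.toReal_le_of_le_ofReal one_pos.le (by simpa using this)
                have hnn2 : (0:ℝ) ≤ x ^ (k/2) / (Nat.factorial (k/2)) :=
                  div_nonneg (pow_nonneg hx.1 _) (Nat.cast_nonneg _)
                nlinarith
    · -- k odd, k+1 even: Lebesgue step
      have heven : ¬ Odd (k+1) := by simp [Nat.odd_iff, Nat.even_iff] at hk ⊢; omega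
      obtain ⟨m, hm⟩ := hk
      rw [genP_succ_even μ k heven]
      have hii : ∀ x ∈ Icc (0:ℝ) 1, IntervalIntegrable (genP μ k) volume 0 x := by
        intro x hx
        rw [intervalIntegrable_iff_integrableOn_Ioc_of_le hx.1]
        exact hint volume (Ioc_subset_Icc_self.trans (Icc_subset_Icc le_rfl hx.2))
          (by simp)
      have hae : ∀ x ∈ Icc (0:ℝ) 1, 0 ≤ᵐ[volume.restrict (Ioc 0 x)] genP μ k := by
        intro x hx
        refine (ae_restrict_iff' measurableSet_Ioc).2 (ae_of_all _ fun t ht => ?_)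
        exact hnn t ⟨le_of_lt ht.1, ht.2.trans hx.2⟩
      constructor
      · intro a ha b hb hab
        exact intervalIntegral.integral_mono_interval le_rfl ha.1 hab (hae b hb) (hii b hb)
      · intro x hx
        have hdiv : (k+1)/2 = k/2 + 1 := by omega
        have hdiv2 : k/2 = m := by omega
        rw [hdiv, hdiv2]
        simp only []
        constructor
        · simpa using intervalIntegral.integral_mono_interval le_rfl le_rfl hx.1 (hae x hx) (hii x hx)
        · have hcont : Continuous (fun t : ℝ => t ^ m / (Nat.factorial m)) :=
            (continuous_pow m).div_const _
          calc (∫ t in (0:ℝ)..x, genP μ k t)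
              ≤ ∫ t in (0:ℝ)..x, (t ^ m / (Nat.factorial m) : ℝ) := by
                refine intervalIntegral.integral_mono_on hx.1 (hii x hx)
                  (hcont.intervalIntegrable _ _) ?_
                intro t ht
                rw [← hdiv2]
                exact (ihb t ⟨ht.1, ht.2.trans hx.2⟩).2
            _ = x ^ (m+1) / (Nat.factorial (m+1)) := by
                rw [intervalIntegral.integral_div, integral_pow, Nat.factorial_succ]
                push_cast
                rw [div_div, zero_pow (Nat.succ_ne_zero m), sub_zero]
  

lemma genP_integrableOn (μ : Measure ℝ) [IsProbabilityMeasure μ] (k : ℕ)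
    (ν : Measure ℝ) {a b : ℝ} (hsub : Ioc a b ⊆ Icc 0 1) (hfin : ν (Ioc a b) ≠ ⊤) :
    IntegrableOn (genP μ k) (Ioc a b) ν := by
  obtain ⟨ihm, ihb⟩ := genP_key μ k
  have hmc : Monotone (fun t => genP μ k (clampI t)) :=
    fun p q hpq => ihm (clampI_mem p) (clampI_mem q) (clampI_mono hpq)
  have haesm : AEStronglyMeasurable (genP μ k) (ν.restrict (Ioc a b)) := by
    refine hmc.measurable.aestronglyMeasurable.congr ?_
    refine (ae_restrict_iff' measurableSet_Ioc).2 (ae_of_all _ fun t ht => ?_)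
    simp only []
    rw [show clampI t = t from clampI_eq (hsub ht)]
  refine Integrable.mono' (g := fun _ => ((Nat.factorial (k/2)) : ℝ)⁻¹) ?_ haesm ?_
  · exact (integrableOn_const hfin)
  · refine (ae_restrict_iff' measurableSet_Ioc).2 (ae_of_all _ fun t ht => ?_)
    have hb := ihb t (hsub ht)
    have ht1 : t ^ (k/2) ≤ 1 := pow_le_one₀ (hsub ht).1 (hsub ht).2
    have hfp : (0:ℝ) < Nat.factorial (k/2) := Nat.cast_pos.2 (Nat.factorial_pos _)
    rw [Real.norm_eq_abs, abs_of_nonneg hb.1]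
    calc genP μ k t ≤ t ^ (k/2) / (Nat.factorial (k/2)) := hb.2
      _ ≤ 1 / (Nat.factorial (k/2)) := (div_le_div_iff_of_pos_right hfp).2 ht1
      _ = ((Nat.factorial (k/2)) : ℝ)⁻¹ := one_div _

lemma genP_nonneg (μ : Measure ℝ) [IsProbabilityMeasure μ] (k : ℕ) {x : ℝ}
    (hx : x ∈ Icc (0:ℝ) 1) : 0 ≤ genP μ k x := ((genP_key μ k).2 x hx).1

lemma genP_le (μ : Measure ℝ) [IsProbabilityMeasure μ] (k : ℕ) {x : ℝ}
    (hx : x ∈ Icc (0:ℝ) 1) : genP μ k x ≤ ((Nat.factorial (k/2)) : ℝ)⁻¹ := by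
  have hfp : (0:ℝ) < Nat.factorial (k/2) := Nat.cast_pos.2 (Nat.factorial_pos _)
  calc genP μ k x ≤ x ^ (k/2) / (Nat.factorial (k/2)) := ((genP_key μ k).2 x hx).2
    _ ≤ 1 / (Nat.factorial (k/2)) :=
        (div_le_div_iff_of_pos_right hfp).2 (pow_le_one₀ hx.1 hx.2)
    _ = _ := one_div _

/-- The crucial tsum/integral swap, stated for a general finite measure on `Ioc 0 y ⊆ [0,1]`. -/
lemma swap_tsum_integral (μ : Measure ℝ) [IsProbabilityMeasure μ] {l : ℝ} (hl : 0 < l)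
    (j : ℕ → ℕ) (hj : ∀ k, (j k) / 2 = k)
    (ν : Measure ℝ) {y : ℝ} (hy : y ∈ Icc (0:ℝ) 1) (hfin : ν (Ioc 0 y) ≤ 1) :
    ∫ t in Ioc (0:ℝ) y, (∑' k : ℕ, l ^ k * genP μ (j k) t) ∂ν
      = ∑' k : ℕ, l ^ k * ∫ t in Ioc (0:ℝ) y, genP μ (j k) t ∂ν := by
  have hsub : Ioc (0:ℝ) y ⊆ Icc 0 1 := fun t ht => ⟨ht.1.le, ht.2.trans hy.2⟩
  have hfin' : ν (Ioc (0:ℝ) y) ≠ ⊤ := (hfin.trans_lt ENNReal.one_lt_top).ne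
  have hInt : ∀ k : ℕ, Integrable (fun t => l ^ k * genP μ (j k) t)
      (ν.restrict (Ioc (0:ℝ) y)) :=
    fun k => (genP_integrableOn μ (j k) ν hsub hfin').const_mul _
  have hbound : ∀ k : ℕ, ∫ t in Ioc (0:ℝ) y, ‖l ^ k * genP μ (j k) t‖ ∂ν
      ≤ l ^ k / (Nat.factorial k) := by
    intro k
    have hle : ∀ t ∈ Ioc (0:ℝ) y, ‖l ^ k * genP μ (j k) t‖ ≤ l ^ k / (Nat.factorial k) := by
      intro t ht
      have h1 := genP_nonneg μ (j k) (hsub ht)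
      have h2 := genP_le μ (j k) (hsub ht)
      rw [hj k] at h2
      rw [Real.norm_eq_abs, abs_of_nonneg (mul_nonneg (pow_nonneg hl.le _) h1),
        div_eq_mul_inv]
      exact mul_le_mul_of_nonneg_left h2 (pow_nonneg hl.le _)
    calc ∫ t in Ioc (0:ℝ) y, ‖l ^ k * genP μ (j k) t‖ ∂ν
        ≤ ∫ _t in Ioc (0:ℝ) y, (l ^ k / (Nat.factorial k) : ℝ) ∂ν := by
          refine setIntegral_mono_on (hInt k).norm
            (integrableOn_const hfin') measurableSet_Ioc hle
      _ = (ν (Ioc 0 y)).toReal * (l ^ k / (Nat.factorial k)) := by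
          rw [setIntegral_const, smul_eq_mul]; rfl
      _ ≤ 1 * (l ^ k / (Nat.factorial k)) := by
          refine mul_le_mul_of_nonneg_right ?_
            (div_nonneg (pow_nonneg hl.le _) (Nat.cast_nonneg _))
          exact ENNReal.toReal_le_of_le_ofReal one_pos.le (by simpa using hfin)
      _ = l ^ k / (Nat.factorial k) := one_mul _
  have hSum : Summable fun k : ℕ => ∫ t in Ioc (0:ℝ) y, ‖l ^ k * genP μ (j k) t‖ ∂ν := by
    refine Summable.of_nonneg_of_le (fun k => integral_nonneg fun t => norm_nonneg _)
      hbound (Real.summable_pow_div_factorial l)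
  rw [← MeasureTheory.integral_tsum_of_summable_integral_norm hInt hSum]
  exact tsum_congr fun k => integral_const_mul _ _

theorem stmt_13 (μ : Measure ℝ) [IsProbabilityMeasure μ]
    (hsupp : μ (Set.Icc (0:ℝ) 1)ᶜ = 0) (hna : ∀ x : ℝ, μ {x} = 0)
    (h0 : ∀ ε > (0:ℝ), 0 < μ (Set.Icc 0 ε)) (h1 : ∀ ε > (0:ℝ), 0 < μ (Set.Icc (1 - ε) 1))
    (l : ℝ) (hl : 0 < l) :
    ∀ x ∈ Set.Icc (0:ℝ) 1,
      coshL μ l x = 1 + l * ∫ y in (0:ℝ)..x, (∫ t in (0:ℝ)..y, coshL μ l t ∂μ) := by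
  intro x hx
  have hodd : ∀ k : ℕ, Odd (2*k+1) := fun k => ⟨k, by ring⟩
  have hnotodd : ∀ k : ℕ, ¬ Odd (2*k+1+1) := fun k => by
    simp [Nat.odd_iff]; omega
  have hPodd : ∀ (k : ℕ) {y : ℝ}, 0 ≤ y →
      genP μ (2*k+1) y = ∫ t in Ioc (0:ℝ) y, genP μ (2*k) t ∂μ := by
    intro k y hy
    rw [genP_succ_odd μ (2*k) (hodd k)]
    exact intervalIntegral.integral_of_le hy
  have hPeven : ∀ (k : ℕ) {y : ℝ}, 0 ≤ y →
      genP μ (2*k+1+1) y = ∫ t in Ioc (0:ℝ) y, genP μ (2*k+1) t := by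
    intro k y hy
    rw [genP_succ_even μ (2*k+1) (hnotodd k)]
    exact intervalIntegral.integral_of_le hy
  have hinner : ∀ y ∈ Icc (0:ℝ) 1,
      (∫ t in (0:ℝ)..y, coshL μ l t ∂μ) = ∑' k : ℕ, l^k * genP μ (2*k+1) y := by
    intro y hy
    rw [intervalIntegral.integral_of_le hy.1]
    have hs := swap_tsum_integral μ hl (fun k => 2*k) (fun k => by simp) μ hy prob_le_one
    simp only [coshL]
    rw [hs]
    exact tsum_congr fun k => by rw [hPodd k hy.1]
  have houter : (∫ y in (0:ℝ)..x, ∫ t in (0:ℝ)..y, coshL μ l t ∂μ)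
      = ∑' k : ℕ, l^k * genP μ (2*k+1+1) x := by
    rw [intervalIntegral.integral_of_le hx.1]
    rw [setIntegral_congr_fun measurableSet_Ioc
      (fun y hy => hinner y ⟨hy.1.le, hy.2.trans hx.2⟩)]
    have hvol : volume (Ioc (0:ℝ) x) ≤ 1 := by
      rw [Real.volume_Ioc]
      simpa using ENNReal.ofReal_le_one.2 (by linarith [hx.2])
    have hs := swap_tsum_integral μ hl (fun k => 2*k+1) (fun k => by omega) volume hx hvol
    rw [hs]
    exact tsum_congr fun k => by rw [hPeven k hx.1]
  rw [houter]
  have hsumm : Summable (fun k : ℕ => l^k * genP μ (2*k) x) := by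
    refine Summable.of_nonneg_of_le
      (fun k => mul_nonneg (pow_nonneg hl.le _) (genP_nonneg μ _ hx)) (fun k => ?_)
      (Real.summable_pow_div_factorial l)
    have h2 := genP_le μ (2*k) hx
    rw [show (2*k)/2 = k from by omega] at h2
    rw [div_eq_mul_inv]
    exact mul_le_mul_of_nonneg_left h2 (pow_nonneg hl.le _)
  rw [show coshL μ l x = ∑' k : ℕ, l^k * genP μ (2*k) x from rfl,
    Summable.tsum_eq_zero_add hsumm]
  congr 1
  · simp [genP]
  · rw [← tsum_mul_left]
    exact tsum_congr fun k => by
      rw [show 2*(k+1) = 2*k+1+1 from by ring, pow_succ]; ring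
end
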